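/- Let Ω: TM → V be a virtual immersion of a Riemannian manifold with second fundamental form II. Then the Gauss equation holds: R(X,Y,Z,W) = ⟨II(Y,W),II(X,Z)⟩ − ⟨II(X,W),II(Y,Z)⟩, where R is the Riemann curvature tensor of M with sign convention R(X,Y)Z = ∇_Y∇_X Z − ∇_X∇_Y Z + ∇_{[X,Y]}Z. -/

import Mathlib

/-- (Gauss equation, in the chart model where the manifold is a
finite-dimensional real vector space `E` and the flat connection `D` is
`fderiv`.) For a virtual immersion `Ω` with second fundamental form `II`, the
curvature tensor `R` of the Levi-Civita connection, with the sign convention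
`R(X,Y)Z = ∇_Y∇_X Z − ∇_X∇_Y Z + ∇_{[X,Y]}Z`, satisfies
`R(X,Y,Z,W) = ⟨II(Y,W),II(X,Z)⟩ − ⟨II(X,W),II(Y,Z)⟩`. -/
noncomputable def Bcont {V : Type*} [NormedAddCommGroup V] [NormedSpace ℝ V]
    [FiniteDimensional ℝ V] (B : V →ₗ[ℝ] V →ₗ[ℝ] ℝ) : V →L[ℝ] V →L[ℝ] ℝ :=
  LinearMap.toContinuousLinearMap
    { toFun := fun u => LinearMap.toContinuousLinearMap (B u)
      map_add' := fun a b => by ext v; simp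
      map_smul' := fun c a => by ext v; simp }

lemma Bcont_apply {V : Type*} [NormedAddCommGroup V] [NormedSpace ℝ V]
    [FiniteDimensional ℝ V] (B : V →ₗ[ℝ] V →ₗ[ℝ] ℝ) (u v : V) :
    Bcont B u v = B u v := by
  simp [Bcont]

lemma fderivB {E V : Type*} [NormedAddCommGroup E] [NormedSpace ℝ E]
    [NormedAddCommGroup V] [NormedSpace ℝ V] [FiniteDimensional ℝ V]
    (B : V →ₗ[ℝ] V →ₗ[ℝ] ℝ) {u v : E → V} {p : E}
    (hu : DifferentiableAt ℝ u p) (hv : DifferentiableAt ℝ v p) (w : E) :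
    fderiv ℝ (fun q => B (u q) (v q)) p w
      = B (fderiv ℝ u p w) (v p) + B (u p) (fderiv ℝ v p w) := by
  have hc : HasFDerivAt (fun q => Bcont B (u q)) ((Bcont B).comp (fderiv ℝ u p)) p :=
    ((Bcont B).hasFDerivAt).comp p hu.hasFDerivAt
  have h := hc.clm_apply hv.hasFDerivAt
  have heq : (fun q => B (u q) (v q)) = fun q => Bcont B (u q) (v q) := by
    funext q; rw [Bcont_apply]
  rw [heq, h.fderiv]
  simp [Bcont_apply]
  ring

theorem stmt_15 {E V : Type*}
    [NormedAddCommGroup E] [NormedSpace ℝ E] [FiniteDimensional ℝ E]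
    [NormedAddCommGroup V] [NormedSpace ℝ V] [FiniteDimensional ℝ V]
    -- the nondegenerate symmetric bilinear form on V
    (B : V →ₗ[ℝ] V →ₗ[ℝ] ℝ) (hBsymm : ∀ u v : V, B u v = B v u)
    (hBnd : ∀ u : V, (∀ v : V, B u v = 0) → u = 0)
    -- the Riemannian metric g
    (g : E → E →ₗ[ℝ] E →ₗ[ℝ] ℝ) (hgsymm : ∀ p (v w : E), g p v w = g p w v)
    (hgpos : ∀ p (v : E), v ≠ 0 → 0 < g p v v)
    -- the V-valued one-form Ω, satisfying condition (a)
    (Ω : E → (E →L[ℝ] V)) (hΩ : ContDiff ℝ (⊤ : ℕ∞) Ω)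
    (ha : ∀ p (v w : E), B (Ω p v) (Ω p w) = g p v w)
    -- condition (b): ⟨dΩ(X,Y), Ω(Z)⟩ = 0
    (hb : ∀ X Y : E → E, ContDiff ℝ (⊤ : ℕ∞) X → ContDiff ℝ (⊤ : ℕ∞) Y → ∀ p (z : E),
        B (fderiv ℝ (fun q => Ω q (Y q)) p (X p)
            - fderiv ℝ (fun q => Ω q (X q)) p (Y p)
            - Ω p (fderiv ℝ Y p (X p) - fderiv ℝ X p (Y p))) (Ω p z) = 0)
    -- the Levi-Civita connection ∇ of g: torsion-free and metric
    (nabla : (E → E) → (E → E) → (E → E))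
    (hns : ∀ X Y : E → E, ContDiff ℝ (⊤ : ℕ∞) X → ContDiff ℝ (⊤ : ℕ∞) Y →
      ContDiff ℝ (⊤ : ℕ∞) (nabla X Y))
    (htf : ∀ X Y : E → E, ContDiff ℝ (⊤ : ℕ∞) X → ContDiff ℝ (⊤ : ℕ∞) Y →
      ∀ p, nabla X Y p - nabla Y X p = fderiv ℝ Y p (X p) - fderiv ℝ X p (Y p))
    (hmetric : ∀ X Y Z : E → E, ContDiff ℝ (⊤ : ℕ∞) X → ContDiff ℝ (⊤ : ℕ∞) Y →
      ContDiff ℝ (⊤ : ℕ∞) Z → ∀ p,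
      fderiv ℝ (fun q => g q (Y q) (Z q)) p (X p)
        = g p (nabla X Y p) (Z p) + g p (Y p) (nabla X Z p))
    -- the second fundamental form II(X,Y) = D_X(Ω(Y)) − Ω(∇_X Y)
    (II : (E → E) → (E → E) → E → V)
    (hII : ∀ (X Y : E → E) p,
      II X Y p = fderiv ℝ (fun q => Ω q (Y q)) p (X p) - Ω p (nabla X Y p))
    -- the curvature tensor R(X,Y)Z = ∇_Y ∇_X Z − ∇_X ∇_Y Z + ∇_{[X,Y]} Z
    (Rt : (E → E) → (E → E) → (E → E) → E → E)
    (hRt : ∀ (X Y Z : E → E) p,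
      Rt X Y Z p = nabla Y (nabla X Z) p - nabla X (nabla Y Z) p
        + nabla (fun q => fderiv ℝ Y q (X q) - fderiv ℝ X q (Y q)) Z p) :
    ∀ X Y Z W : E → E, ContDiff ℝ (⊤ : ℕ∞) X → ContDiff ℝ (⊤ : ℕ∞) Y →
      ContDiff ℝ (⊤ : ℕ∞) Z → ContDiff ℝ (⊤ : ℕ∞) W → ∀ p,
      g p (Rt X Y Z p) (W p)
        = B (II Y W p) (II X Z p) - B (II X W p) (II Y Z p) := by
  have hone : ((⊤ : ℕ∞) : WithTop ℕ∞) ≠ 0 := by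
    simp
  have htop1 : ((⊤ : ℕ∞) : WithTop ℕ∞) + 1 ≤ ((⊤ : ℕ∞) : WithTop ℕ∞) := by
    exact_mod_cast le_top
  -- smoothness of q ↦ Ω q (F q)
  have hΩap : ∀ (F : E → E), ContDiff ℝ (⊤ : ℕ∞) F →
      ContDiff ℝ (⊤ : ℕ∞) (fun q => Ω q (F q)) := fun F hF => hΩ.clm_apply hF
  -- II of smooth fields is smooth
  have hIIs : ∀ (A C : E → E), ContDiff ℝ (⊤ : ℕ∞) A → ContDiff ℝ (⊤ : ℕ∞) C →
      ContDiff ℝ (⊤ : ℕ∞) (II A C) := by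
    intro A C hA hC
    have heq : II A C = fun q => fderiv ℝ (fun r => Ω r (C r)) q (A q) - Ω q (nabla A C q) :=
      funext (hII A C)
    rw [heq]
    exact (((hΩap C hC).fderiv_right htop1).clm_apply hA).sub (hΩap _ (hns A C hA hC))
  -- step A : metric compatibility consequence
  have stepA : ∀ (A C D : E → E), ContDiff ℝ (⊤ : ℕ∞) A → ContDiff ℝ (⊤ : ℕ∞) C →
      ContDiff ℝ (⊤ : ℕ∞) D → ∀ q,
      B (II A C q) (Ω q (D q)) + B (II A D q) (Ω q (C q)) = 0 := by
    intro A C D hA hC hD q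
    have hu : DifferentiableAt ℝ (fun r => Ω r (C r)) q :=
      ((hΩap C hC).differentiable hone).differentiableAt
    have hv : DifferentiableAt ℝ (fun r => Ω r (D r)) q :=
      ((hΩap D hD).differentiable hone).differentiableAt
    have L := fderivB B hu hv (A q)
    have e1 : (fun r => B (Ω r (C r)) (Ω r (D r))) = fun r => g r (C r) (D r) :=
      funext fun r => ha r (C r) (D r)
    have R : fderiv ℝ (fun r => B (Ω r (C r)) (Ω r (D r))) q (A q)
        = g q (nabla A C q) (D q) + g q (C q) (nabla A D q) := by
      rw [e1]; exact hmetric A C D hA hC hD q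
    rw [R] at L
    have hc := hII A C q
    have hd := hII A D q
    have e2 : B (II A C q) (Ω q (D q))
        = B (fderiv ℝ (fun r => Ω r (C r)) q (A q)) (Ω q (D q)) - g q (nabla A C q) (D q) := by
      rw [hc, map_sub, LinearMap.sub_apply, ha]
    have e3 : B (II A D q) (Ω q (C q))
        = B (fderiv ℝ (fun r => Ω r (D r)) q (A q)) (Ω q (C q)) - g q (nabla A D q) (C q) := by
      rw [hd, map_sub, LinearMap.sub_apply, ha]
    have e4 : B (Ω q (C q)) (fderiv ℝ (fun r => Ω r (D r)) q (A q))
        = B (fderiv ℝ (fun r => Ω r (D r)) q (A q)) (Ω q (C q)) := hBsymm _ _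
    have e5 : g q (C q) (nabla A D q) = g q (nabla A D q) (C q) := hgsymm q _ _
    rw [e4, e5] at L
    linarith [L, e2, e3]
  -- step B : symmetry of II in its two arguments, paired against Ω
  have stepB : ∀ (A C : E → E), ContDiff ℝ (⊤ : ℕ∞) A → ContDiff ℝ (⊤ : ℕ∞) C →
      ∀ q (w : E), B (II A C q) (Ω q w) = B (II C A q) (Ω q w) := by
    intro A C hA hC q w
    have hbb := hb A C hA hC q w
    have htfq := htf A C hA hC q
    have hdiff : II A C q - II C A q
        = fderiv ℝ (fun r => Ω r (C r)) q (A q) - fderiv ℝ (fun r => Ω r (A r)) q (C q)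
          - Ω q (fderiv ℝ C q (A q) - fderiv ℝ A q (C q)) := by
      rw [hII A C q, hII C A q, ← htfq, map_sub (Ω q)]
      abel
    have : B (II A C q - II C A q) (Ω q w) = 0 := by rw [hdiff]; exact hbb
    rw [map_sub, LinearMap.sub_apply] at this
    linarith
  -- normality of II
  have hnorm : ∀ (A C : E → E), ContDiff ℝ (⊤ : ℕ∞) A → ContDiff ℝ (⊤ : ℕ∞) C →
      ∀ q (w : E), B (II A C q) (Ω q w) = 0 := by
    intro A C hA hC q w
    set D : E → E := fun _ => w with hD
    have hDs : ContDiff ℝ (⊤ : ℕ∞) D := contDiff_const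
    have h1 := stepA A C D hA hC hDs q
    have h2 := stepA C A D hC hA hDs q
    have h3 := stepA D A C hDs hA hC q
    have h4 := stepB A C hA hC q (D q)
    have h5 := stepB C D hC hDs q (A q)
    have h6 := stepB D A hDs hA q (C q)
    have h7 := stepB A D hA hDs q (C q)
    -- T A C D = 0 by the rotation argument
    have : B (II A C q) (Ω q (D q)) = 0 := by linarith
    simpa using this
  -- pairing of the ambient derivative with Ω
  have pairfact : ∀ (A C : E → E), ContDiff ℝ (⊤ : ℕ∞) A → ContDiff ℝ (⊤ : ℕ∞) C →
      ∀ q (w : E),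
      B (fderiv ℝ (fun r => Ω r (C r)) q (A q)) (Ω q w) = g q (nabla A C q) w := by
    intro A C hA hC q w
    have : fderiv ℝ (fun r => Ω r (C r)) q (A q) = II A C q + Ω q (nabla A C q) := by
      rw [hII A C q]; abel
    rw [this, map_add, LinearMap.add_apply, hnorm A C hA hC q w, ha]
    ring
  -- main computation
  intro X Y Z W hX hY hZ hW p
  have hZs : ContDiff ℝ (⊤ : ℕ∞) (fun q => Ω q (Z q)) := hΩap Z hZ
  have hWs : ContDiff ℝ (⊤ : ℕ∞) (fun q => Ω q (W q)) := hΩap W hW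
  have hf' : ContDiff ℝ (⊤ : ℕ∞) (fderiv ℝ (fun q => Ω q (Z q))) := hZs.fderiv_right htop1
  -- expand D_A D_C pairing : generic in the two direction fields
  have expand : ∀ (A C : E → E), ContDiff ℝ (⊤ : ℕ∞) A → ContDiff ℝ (⊤ : ℕ∞) C →
      B (fderiv ℝ (fun q => fderiv ℝ (fun r => Ω r (Z r)) q (A q)) p (C p)) (Ω p (W p))
        = g p (nabla C (nabla A Z) p) (W p) - B (II A Z p) (II C W p) := by
    intro A C hA hC
    have hsplit : (fun q => fderiv ℝ (fun r => Ω r (Z r)) q (A q))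
        = fun q => Ω q (nabla A Z q) + II A Z q := by
      funext q; rw [hII A Z q]; abel
    have hd1 : DifferentiableAt ℝ (fun q => Ω q (nabla A Z q)) p :=
      ((hΩap _ (hns A Z hA hZ)).differentiable hone).differentiableAt
    have hd2 : DifferentiableAt ℝ (II A Z) p :=
      ((hIIs A Z hA hZ).differentiable hone).differentiableAt
    have e1 : fderiv ℝ (fun q => fderiv ℝ (fun r => Ω r (Z r)) q (A q)) p (C p)
        = fderiv ℝ (fun q => Ω q (nabla A Z q)) p (C p) + fderiv ℝ (II A Z) p (C p) := by
      rw [hsplit, fderiv_fun_add hd1 hd2]; rfl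
    have p1 : B (fderiv ℝ (fun q => Ω q (nabla A Z q)) p (C p)) (Ω p (W p))
        = g p (nabla C (nabla A Z) p) (W p) :=
      pairfact C (nabla A Z) hC (hns A Z hA hZ) p (W p)
    have p2 : B (fderiv ℝ (II A Z) p (C p)) (Ω p (W p)) = - B (II A Z p) (II C W p) := by
      have hz : (fun q => B (II A Z q) (Ω q (W q))) = fun _ => (0:ℝ) :=
        funext fun q => hnorm A Z hA hZ q (W q)
      have hdW : DifferentiableAt ℝ (fun q => Ω q (W q)) p :=
        (hWs.differentiable hone).differentiableAt
      have hd := fderivB B hd2 hdW (C p)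
      rw [hz] at hd
      simp only [fderiv_fun_const, Pi.zero_apply, ContinuousLinearMap.zero_apply] at hd
      have hw : fderiv ℝ (fun q => Ω q (W q)) p (C p) = Ω p (nabla C W p) + II C W p := by
        rw [hII C W p]; abel
      rw [hw, map_add] at hd
      have hn2 : B (II A Z p) (Ω p (nabla C W p)) = 0 := hnorm A Z hA hZ p _
      linarith
    rw [e1, map_add, LinearMap.add_apply, p1, p2]
    ring
  have ex1 := expand X Y hX hY
  have ex2 := expand Y X hY hX
  -- flatness
  have hfd : ∀ y, HasFDerivAt (fun q => Ω q (Z q)) (fderiv ℝ (fun q => Ω q (Z q)) y) y :=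
    fun y => ((hZs.differentiable hone) y).hasFDerivAt
  have hf'd : HasFDerivAt (fderiv ℝ (fun q => Ω q (Z q)))
      (fderiv ℝ (fderiv ℝ (fun q => Ω q (Z q))) p) p :=
    ((hf'.differentiable hone) p).hasFDerivAt
  have hsym := second_derivative_symmetric hfd hf'd (Y p) (X p)
  have eA : fderiv ℝ (fun q => fderiv ℝ (fun r => Ω r (Z r)) q (X q)) p (Y p)
      = fderiv ℝ (fderiv ℝ (fun q => Ω q (Z q))) p (Y p) (X p)
        + fderiv ℝ (fun q => Ω q (Z q)) p (fderiv ℝ X p (Y p)) := by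
    rw [fderiv_clm_apply ((hf'.differentiable hone) p) ((hX.differentiable hone) p)]
    simp [ContinuousLinearMap.add_apply, ContinuousLinearMap.comp_apply,
      ContinuousLinearMap.flip_apply]
    abel
  have eB : fderiv ℝ (fun q => fderiv ℝ (fun r => Ω r (Z r)) q (Y q)) p (X p)
      = fderiv ℝ (fderiv ℝ (fun q => Ω q (Z q))) p (X p) (Y p)
        + fderiv ℝ (fun q => Ω q (Z q)) p (fderiv ℝ Y p (X p)) := by
    rw [fderiv_clm_apply ((hf'.differentiable hone) p) ((hY.differentiable hone) p)]
    simp [ContinuousLinearMap.add_apply, ContinuousLinearMap.comp_apply,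
      ContinuousLinearMap.flip_apply]
    abel
  have flat : fderiv ℝ (fun q => fderiv ℝ (fun r => Ω r (Z r)) q (X q)) p (Y p)
      - fderiv ℝ (fun q => fderiv ℝ (fun r => Ω r (Z r)) q (Y q)) p (X p)
      + fderiv ℝ (fun q => Ω q (Z q)) p (fderiv ℝ Y p (X p) - fderiv ℝ X p (Y p)) = 0 := by
    rw [eA, eB, hsym, map_sub]
    abel
  -- bracket field
  set br : E → E := fun q => fderiv ℝ Y q (X q) - fderiv ℝ X q (Y q) with hbrdef
  have hbrs : ContDiff ℝ (⊤ : ℕ∞) br :=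
    ((hY.fderiv_right htop1).clm_apply hX).sub ((hX.fderiv_right htop1).clm_apply hY)
  have d3 : B (fderiv ℝ (fun r => Ω r (Z r)) p (br p)) (Ω p (W p))
      = g p (nabla br Z p) (W p) := pairfact br Z hbrs hZ p (W p)
  have hbrp : br p = fderiv ℝ Y p (X p) - fderiv ℝ X p (Y p) := rfl
  -- pair flatness with Ω W
  have flatp : B (fderiv ℝ (fun q => fderiv ℝ (fun r => Ω r (Z r)) q (X q)) p (Y p)) (Ω p (W p))
      - B (fderiv ℝ (fun q => fderiv ℝ (fun r => Ω r (Z r)) q (Y q)) p (X p)) (Ω p (W p))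
      + B (fderiv ℝ (fun r => Ω r (Z r)) p (br p)) (Ω p (W p)) = 0 := by
    have := congrArg (fun v => B v (Ω p (W p))) flat
    simpa [map_add, map_sub, LinearMap.add_apply, LinearMap.sub_apply, hbrp] using this
  -- assemble
  rw [hRt X Y Z p]
  simp only [map_sub, map_add, LinearMap.sub_apply, LinearMap.add_apply]
  have hs1 : B (II Y W p) (II X Z p) = B (II X Z p) (II Y W p) := hBsymm _ _
  have hs2 : B (II X W p) (II Y Z p) = B (II Y Z p) (II X W p) := hBsymm _ _
  rw [← hbrdef]
  linarith [ex1, ex2, d3, flatp, hs1, hs2]
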